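/- Let q be a prime power. For even n = 2m ≥ 4, the number of orbits of PGL_2(F_q) acting diagonally on the set C_n of n-tuples of points of P^1(F_q) with cyclically adjacent points distinct is 1 + q·[m-1]_{q^2}, where [j]_{q^2} = (q^{2j}-1)/(q^2-1). -/

import Mathlib

open Finset
open scoped LinearAlgebra.Projectivization

/-- The cyclic successor of `i : Fin n`. -/
def cycSucc {n : ℕ} (i : Fin n) : Fin n := ⟨(i.1 + 1) % n, Nat.mod_lt _ i.pos⟩

/-- Cyclic configurations of `n` points of `ℙ¹(K)` with cyclically adjacent points distinct. -/
def cycConfig (K : Type*) [Field K] (n : ℕ) : Set (Fin n → ℙ K (Fin 2 → K)) :=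
  {v | ∀ i, v i ≠ v (cycSucc i)}

/-- Two cyclic configurations are related iff some projective linear transformation
(induced by a linear automorphism of `K²`, i.e. an element of `PGL₂(K)`) maps one
to the other. -/
def pglRel (K : Type*) [Field K] (n : ℕ) (x y : cycConfig K n) : Prop :=
  ∃ g : (Fin 2 → K) ≃ₗ[K] (Fin 2 → K),
    ∀ i, Projectivization.map g.toLinearMap g.injective ((x : Fin n → ℙ K (Fin 2 → K)) i)
      = (y : Fin n → ℙ K (Fin 2 → K)) i

namespace CycOrb

variable {K : Type*} [Field K]

abbrev Pt (K : Type*) [Field K] := ℙ K (Fin 2 → K)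

noncomputable def p0 : Pt K := Projectivization.mk K ![1,0] (by
  intro h; have := congrFun h 0; simp at this)
noncomputable def p1 : Pt K := Projectivization.mk K ![0,1] (by
  intro h; have := congrFun h 1; simp at this)
noncomputable def p2 : Pt K := Projectivization.mk K ![1,1] (by
  intro h; have := congrFun h 0; simp at this)

lemma p0_ne_p1 : (p0 : Pt K) ≠ p1 := by
  intro h
  rw [p0, p1, Projectivization.mk_eq_mk_iff'] at h
  obtain ⟨a, ha⟩ := h
  have := congrFun ha 0; simp at this

lemma p0_ne_p2 : (p0 : Pt K) ≠ p2 := by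
  intro h
  rw [p0, p2, Projectivization.mk_eq_mk_iff'] at h
  obtain ⟨a, ha⟩ := h
  have h1 := congrFun ha 1; have h0 := congrFun ha 0; simp at h1 h0
  rw [h1] at h0; simp at h0

lemma p1_ne_p2 : (p1 : Pt K) ≠ p2 := by
  intro h
  rw [p1, p2, Projectivization.mk_eq_mk_iff'] at h
  obtain ⟨a, ha⟩ := h
  have h0 := congrFun ha 0; have h1 := congrFun ha 1; simp at h0 h1
  rw [h0] at h1; simp at h1

/-- The projective line over `K` is equivalent to `Option K`. -/
noncomputable def ptEquiv : Option K ≃ Pt K := by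
  refine Equiv.ofBijective (fun o => o.elim p0 (fun t => Projectivization.mk K ![t,1] (by
    intro h; have := congrFun h 1; simp at this))) ⟨?_, ?_⟩
  · rintro (_|s) (_|t) h
    · rfl
    · exfalso; simp only [Option.elim] at h
      rw [p0, Projectivization.mk_eq_mk_iff'] at h
      obtain ⟨a, ha⟩ := h; have := congrFun ha 1; simp at this
      have h0 := congrFun ha 0; rw [this] at h0; simp at h0
    · exfalso; simp only [Option.elim] at h
      rw [p0, Projectivization.mk_eq_mk_iff'] at h
      obtain ⟨a, ha⟩ := h; have := congrFun ha 1; simp at this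
    · simp only [Option.elim, Projectivization.mk_eq_mk_iff'] at h
      obtain ⟨a, ha⟩ := h
      have h1 := congrFun ha 1; have h0 := congrFun ha 0; simp at h1 h0
      subst h1; simpa using h0.symm
  · intro p
    induction p using Projectivization.ind with
    | h v hv =>
      by_cases h1 : v 1 = 0
      · refine ⟨none, ?_⟩
        have h0 : v 0 ≠ 0 := by
          intro h0; apply hv; funext i; fin_cases i <;> assumption
        simp only [Option.elim, p0]
        rw [Projectivization.mk_eq_mk_iff']
        exact ⟨(v 0)⁻¹, by funext i; fin_cases i <;> simp [h0, h1]⟩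
      · refine ⟨some (v 0 / v 1), ?_⟩
        simp only [Option.elim]
        rw [Projectivization.mk_eq_mk_iff']
        exact ⟨(v 1)⁻¹, by funext i; fin_cases i <;> simp [h1, div_eq_inv_mul]⟩

end CycOrb

namespace CycOrb

variable {K : Type*} [Field K]

lemma single_zero_eq : (Pi.single 0 1 : Fin 2 → K) = ![1,0] := by
  funext i; fin_cases i <;> simp [Pi.single_apply]

lemma single_one_eq : (Pi.single 1 1 : Fin 2 → K) = ![0,1] := by
  funext i; fin_cases i <;> simp [Pi.single_apply]

/-- Sharp 3-transitivity, existence part: normalize three distinct points to `p0, p1, p2`. -/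
lemma exists_normalize (x y z : Pt K) (hxy : x ≠ y) (hxz : x ≠ z) (hyz : y ≠ z) :
    ∃ g : (Fin 2 → K) ≃ₗ[K] (Fin 2 → K),
      Projectivization.map g.toLinearMap g.injective x = p0 ∧
      Projectivization.map g.toLinearMap g.injective y = p1 ∧
      Projectivization.map g.toLinearMap g.injective z = p2 := by
  classical
  have h2 : Fintype.card (Fin 2) = Module.finrank K (Fin 2 → K) := by
    simp [Module.finrank_fin_fun]
  have li : LinearIndependent K ![x.rep, y.rep] := by
    have h := (Projectivization.independent_pair_iff_ne x y).2 hxy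
    rw [Projectivization.independent_iff] at h
    convert h using 1
    funext i; fin_cases i <;> rfl
    rfl
  set B₀ := basisOfLinearIndependentOfCardEqFinrank li h2 with hB₀
  have hB₀c : ⇑B₀ = ![x.rep, y.rep] := coe_basisOfLinearIndependentOfCardEqFinrank li h2
  set α := B₀.repr z.rep 0 with hα'
  set β := B₀.repr z.rep 1 with hβ'
  have hz : z.rep = α • x.rep + β • y.rep := by
    have := B₀.sum_repr z.rep
    rw [Fin.sum_univ_two] at this
    rw [← this, hB₀c]; simp; rfl
  have hα : α ≠ 0 := by
    intro h
    apply hyz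
    rw [h, zero_smul, zero_add] at hz
    have hβ0 : β ≠ 0 := by
      intro hb; rw [hb, zero_smul] at hz; exact z.rep_nonzero hz
    rw [← Projectivization.mk_rep y, ← Projectivization.mk_rep z]
    rw [Projectivization.mk_eq_mk_iff']
    exact ⟨β⁻¹, by rw [hz, smul_smul, inv_mul_cancel₀ hβ0, one_smul]⟩
  have hβ : β ≠ 0 := by
    intro h
    apply hxz.symm
    rw [h, zero_smul, add_zero] at hz
    rw [← Projectivization.mk_rep z, ← Projectivization.mk_rep x]
    rw [Projectivization.mk_eq_mk_iff']
    exact ⟨α, hz.symm⟩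
  have li2 : LinearIndependent K ![α • x.rep, β • y.rep] := by
    have := li.units_smul ![Units.mk0 α hα, Units.mk0 β hβ]
    convert this using 1
    funext i; fin_cases i <;> simp [Pi.smul_apply']
  set B := basisOfLinearIndependentOfCardEqFinrank li2 h2 with hB
  have hBc : ⇑B = ![α • x.rep, β • y.rep] := coe_basisOfLinearIndependentOfCardEqFinrank li2 h2
  refine ⟨B.equiv (Pi.basisFun K (Fin 2)) (Equiv.refl _), ?_, ?_, ?_⟩
  · rw [← Projectivization.mk_rep x, Projectivization.map_mk, p0,
      Projectivization.mk_eq_mk_iff']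
    refine ⟨α⁻¹, ?_⟩
    have : B.equiv (Pi.basisFun K (Fin 2)) (Equiv.refl _) (B 0) = Pi.single 0 1 := by
      rw [Module.Basis.equiv_apply]; simp
    rw [hBc] at this
    simp only [Matrix.cons_val_zero] at this
    rw [map_smul] at this
    rw [single_zero_eq] at this
    rw [LinearEquiv.coe_coe, ← this, smul_smul, inv_mul_cancel₀ hα, one_smul]
  · rw [← Projectivization.mk_rep y, Projectivization.map_mk, p1,
      Projectivization.mk_eq_mk_iff']
    refine ⟨β⁻¹, ?_⟩
    have : B.equiv (Pi.basisFun K (Fin 2)) (Equiv.refl _) (B 1) = Pi.single 1 1 := by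
      rw [Module.Basis.equiv_apply]; simp
    rw [hBc] at this
    simp only [Matrix.cons_val_one, Matrix.head_cons, Matrix.cons_val_zero] at this
    rw [map_smul] at this
    rw [single_one_eq] at this
    rw [LinearEquiv.coe_coe, ← this, smul_smul, inv_mul_cancel₀ hβ, one_smul]
  · rw [← Projectivization.mk_rep z, Projectivization.map_mk, p2,
      Projectivization.mk_eq_mk_iff']
    refine ⟨1, ?_⟩
    have e0 : B.equiv (Pi.basisFun K (Fin 2)) (Equiv.refl _) (B 0) = Pi.single 0 1 := by
      rw [Module.Basis.equiv_apply]; simp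
    have e1 : B.equiv (Pi.basisFun K (Fin 2)) (Equiv.refl _) (B 1) = Pi.single 1 1 := by
      rw [Module.Basis.equiv_apply]; simp
    rw [hBc] at e0 e1
    simp only [Matrix.cons_val_zero, Matrix.cons_val_one, Matrix.head_cons] at e0 e1
    have hzz : (B.equiv (Pi.basisFun K (Fin 2)) (Equiv.refl _)).toLinearMap z.rep
        = ![1,1] := by
      simp only [LinearEquiv.coe_coe]
      rw [hz, map_add, e0, e1, single_zero_eq, single_one_eq]
      funext i; fin_cases i <;> simp
    rw [hzz, one_smul]

/-- Rigidity: a projective transformation fixing `p0, p1, p2` is the identity. -/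
lemma map_eq_id (g : (Fin 2 → K) ≃ₗ[K] (Fin 2 → K))
    (h0 : Projectivization.map g.toLinearMap g.injective p0 = p0)
    (h1 : Projectivization.map g.toLinearMap g.injective p1 = p1)
    (h2 : Projectivization.map g.toLinearMap g.injective p2 = p2) :
    ∀ p : Pt K, Projectivization.map g.toLinearMap g.injective p = p := by
  rw [p0, Projectivization.map_mk, Projectivization.mk_eq_mk_iff'] at h0
  rw [p1, Projectivization.map_mk, Projectivization.mk_eq_mk_iff'] at h1
  rw [p2, Projectivization.map_mk, Projectivization.mk_eq_mk_iff'] at h2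
  obtain ⟨s, hs⟩ := h0
  obtain ⟨t, ht⟩ := h1
  obtain ⟨u, hu⟩ := h2
  simp only [LinearEquiv.coe_coe] at hs ht hu
  have hsplit : (![1,1] : Fin 2 → K) = ![1,0] + ![0,1] := by
    funext i; fin_cases i <;> simp
  rw [hsplit, map_add, ← hs, ← ht] at hu
  have hu0 := congrFun hu 0
  have hu1 := congrFun hu 1
  simp at hu0 hu1
  have hs0 : s ≠ 0 := by
    intro h
    rw [h, zero_smul] at hs
    have : g ![1,0] ≠ 0 := by
      rw [g.map_ne_zero_iff]
      intro hh; have := congrFun hh 0; simp at this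
    exact this hs.symm
  have hgv : ∀ v : Fin 2 → K, g v = u • v := by
    intro v
    have hv : v = v 0 • ![1,0] + v 1 • ![0,1] := by
      funext i; fin_cases i <;> simp
    rw [hv, map_add, map_smul, map_smul, ← hs, ← ht, ← hu0, ← hu1]
    funext i; fin_cases i <;> simp [mul_comm]
  intro p
  induction p using Projectivization.ind with
  | h v hv =>
    rw [Projectivization.map_mk, Projectivization.mk_eq_mk_iff']
    refine ⟨u, ?_⟩
    simp only [LinearEquiv.coe_coe]
    rw [hgv]

end CycOrb

namespace CycOrb

open Projectivization

variable {K : Type*} [Field K]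

lemma map_map (g h : (Fin 2 → K) ≃ₗ[K] (Fin 2 → K)) (p : Pt K) :
    Projectivization.map h.toLinearMap h.injective
      (Projectivization.map g.toLinearMap g.injective p)
      = Projectivization.map (g ≪≫ₗ h).toLinearMap (g ≪≫ₗ h).injective p := by
  induction p using Projectivization.ind with
  | h v hv => simp only [Projectivization.map_mk]; rfl

lemma map_symm_eq (g : (Fin 2 → K) ≃ₗ[K] (Fin 2 → K)) (p q : Pt K)
    (h : Projectivization.map g.toLinearMap g.injective p = q) :
    Projectivization.map g.symm.toLinearMap g.symm.injective q = p := by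
  subst h
  rw [map_map]
  induction p using Projectivization.ind with
  | h v hv =>
    rw [Projectivization.map_mk, Projectivization.mk_eq_mk_iff']
    exact ⟨1, by simp⟩

lemma pglRel_equivalence (n : ℕ) : Equivalence (pglRel K n) := by
  constructor
  · intro x
    refine ⟨LinearEquiv.refl K _, fun i => ?_⟩
    induction ((x : Fin n → Pt K) i) using Projectivization.ind with
    | h v hv =>
      rw [Projectivization.map_mk, Projectivization.mk_eq_mk_iff']
      exact ⟨1, by simp⟩
  · rintro x y ⟨g, hg⟩
    exact ⟨g.symm, fun i => map_symm_eq g _ _ (hg i)⟩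
  · rintro x y z ⟨g, hg⟩ ⟨h, hh⟩
    refine ⟨g ≪≫ₗ h, fun i => ?_⟩
    rw [← map_map, hg, hh]

/-- The standard alternating pattern `p0, p1, p0, p1, ...`. -/
noncomputable def altP (n : ℕ) : Fin n → Pt K := fun i => if i.1 % 2 = 0 then p0 else p1

lemma altP_mem (n : ℕ) (hdvd : 2 ∣ n) (hn : 0 < n) : altP n ∈ cycConfig K n := by
  intro i
  have hmod : (i.1 + 1) % n % 2 = (i.1 + 1) % 2 := Nat.mod_mod_of_dvd _ hdvd
  simp only [altP, cycSucc]
  rcases Nat.even_or_odd i.1 with he | ho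
  · have h1 : i.1 % 2 = 0 := Nat.even_iff.1 he
    have h2 : (i.1 + 1) % n % 2 = 1 := by omega
    simp [h1, h2, p0_ne_p1]
  · have h1 : i.1 % 2 = 1 := Nat.odd_iff.1 ho
    have h2 : (i.1 + 1) % n % 2 = 0 := by omega
    simp [h1, h2, (p0_ne_p1 (K := K)).symm]

/-- Alternation: if all values up to index `N` lie in `{v 0, v 1}`, the configuration
alternates there. -/
lemma alt_below {n : ℕ} (hn : 2 ≤ n) (v : Fin n → Pt K) (hv : v ∈ cycConfig K n) (N : ℕ)
    (h2 : ∀ i : Fin n, i.1 ≤ N →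
      (v i = v ⟨0, by omega⟩ ∨ v i = v ⟨1, by omega⟩)) :
    ∀ k (hk : k < n), k ≤ N →
      v ⟨k, hk⟩ = if k % 2 = 0 then v ⟨0, by omega⟩ else v ⟨1, by omega⟩ := by
  have h01 : v ⟨0, by omega⟩ ≠ v ⟨1, by omega⟩ := by
    have := hv ⟨0, by omega⟩
    simpa [cycSucc, Nat.mod_eq_of_lt (show 1 < n by omega)] using this
  intro k
  induction k with
  | zero => intro hk _; simp
  | succ k ih =>
    intro hk hkN
    have hkn : k < n := by omega
    have hadj : v ⟨k, hkn⟩ ≠ v ⟨k + 1, hk⟩ := by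
      have := hv ⟨k, hkn⟩
      simpa [cycSucc, Nat.mod_eq_of_lt hk] using this
    have ihk := ih hkn (by omega)
    have hmem := h2 ⟨k + 1, hk⟩ hkN
    rcases Nat.even_or_odd k with he | ho
    · have h1 : k % 2 = 0 := Nat.even_iff.1 he
      rw [if_pos h1] at ihk
      rw [if_neg (by omega : ¬ (k + 1) % 2 = 0)]
      rw [ihk] at hadj
      rcases hmem with h | h
      · exact absurd h.symm hadj
      · exact h
    · have h1 : k % 2 = 1 := Nat.odd_iff.1 ho
      rw [if_neg (by omega : ¬ k % 2 = 0)] at ihk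
      rw [if_pos (by omega : (k + 1) % 2 = 0)]
      rw [ihk] at hadj
      rcases hmem with h | h
      · exact h
      · exact absurd h.symm hadj

/-- A canonical configuration: alternates `p0, p1` before index `j ≥ 2` and equals `p2` at `j`. -/
def IsCanon {n : ℕ} (w : Fin n → Pt K) : Prop :=
  ∃ j : ℕ, ∃ hj : j < n, 2 ≤ j ∧ (∀ i : Fin n, i.1 < j → w i = altP n i) ∧ w ⟨j, hj⟩ = p2

/-- The set of canonical configurations. -/
def Canon (K : Type*) [Field K] (n : ℕ) : Set (cycConfig K n) :=
  {w | IsCanon (w : Fin n → Pt K)}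

lemma canon_j_unique {n : ℕ} (w : Fin n → Pt K) {j j' : ℕ} (hj : j < n) (hj' : j' < n)
    (h1 : ∀ i : Fin n, i.1 < j → w i ∈ ({p0, p1} : Set (Pt K))) (h2 : w ⟨j, hj⟩ ∉ ({p0, p1} : Set (Pt K)))
    (h1' : ∀ i : Fin n, i.1 < j' → w i ∈ ({p0, p1} : Set (Pt K))) (h2' : w ⟨j', hj'⟩ ∉ ({p0, p1} : Set (Pt K))) :
    j = j' := by
  rcases lt_trichotomy j j' with h | h | h
  · exact absurd (h1' ⟨j, hj⟩ h) h2
  · exact h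
  · exact absurd (h1 ⟨j', hj'⟩ h) h2'

lemma altP_mem_pair {n : ℕ} (i : Fin n) : altP n i ∈ ({p0, p1} : Set (Pt K)) := by
  by_cases h : i.1 % 2 = 0 <;> simp [altP, h]

end CycOrb

namespace CycOrb

variable {K : Type*} [Field K]

lemma exists_third (a b : Pt K) : ∃ c : Pt K, c ≠ a ∧ c ≠ b := by
  by_cases h0 : (p0 : Pt K) ≠ a ∧ (p0 : Pt K) ≠ b
  · exact ⟨p0, h0⟩
  by_cases h1 : (p1 : Pt K) ≠ a ∧ (p1 : Pt K) ≠ b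
  · exact ⟨p1, h1⟩
  by_cases h2 : (p2 : Pt K) ≠ a ∧ (p2 : Pt K) ≠ b
  · exact ⟨p2, h2⟩
  exfalso
  push_neg at h0 h1 h2
  have n01 := p0_ne_p1 (K := K)
  have n02 := p0_ne_p2 (K := K)
  have n12 := p1_ne_p2 (K := K)
  have l0 : (p0 : Pt K) = a ∨ (p0 : Pt K) = b := (eq_or_ne (p0 : Pt K) a).imp id h0
  have l1 : (p1 : Pt K) = a ∨ (p1 : Pt K) = b := (eq_or_ne (p1 : Pt K) a).imp id h1
  have l2 : (p2 : Pt K) = a ∨ (p2 : Pt K) = b := (eq_or_ne (p2 : Pt K) a).imp id h2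
  rcases l0 with l0 | l0 <;> rcases l1 with l1 | l1 <;> rcases l2 with l2 | l2
  · exact n01 (l0.trans l1.symm)
  · exact n01 (l0.trans l1.symm)
  · exact n02 (l0.trans l2.symm)
  · exact n12 (l1.trans l2.symm)
  · exact n12 (l1.trans l2.symm)
  · exact n02 (l0.trans l2.symm)
  · exact n01 (l0.trans l1.symm)
  · exact n01 (l0.trans l1.symm)

theorem exists_nf {n : ℕ} (hn : 2 ≤ n) (hdvd : 2 ∣ n) (v : cycConfig K n) :
    ∃ w : cycConfig K n, ((w : Fin n → Pt K) = altP n ∨ w ∈ Canon K n) ∧ pglRel K n v w := by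
  classical
  have h01 : (v : Fin n → Pt K) ⟨0, by omega⟩ ≠ (v : Fin n → Pt K) ⟨1, by omega⟩ := by
    have := v.2 ⟨0, by omega⟩
    simpa [cycSucc, Nat.mod_eq_of_lt (show 1 < n by omega)] using this
  set vf := (v : Fin n → Pt K) with hvf
  by_cases hall : ∀ i : Fin n, vf i = vf ⟨0, by omega⟩ ∨ vf i = vf ⟨1, by omega⟩
  · -- two-valued case: normalize to the alternating configuration
    obtain ⟨c, hc0, hc1⟩ := exists_third (vf ⟨0, by omega⟩) (vf ⟨1, by omega⟩)
    obtain ⟨g, hg0, hg1, hg2⟩ :=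
      exists_normalize (vf ⟨0, by omega⟩) (vf ⟨1, by omega⟩) c h01 (Ne.symm hc0) (Ne.symm hc1)
    have hinj := Projectivization.map_injective g.toLinearMap g.injective
    refine ⟨⟨fun i => Projectivization.map g.toLinearMap g.injective (vf i), ?_⟩, ?_, ?_⟩
    · intro i
      exact fun h => v.2 i (hinj h)
    · left
      funext i
      have halt := alt_below hn vf v.2 (n - 1) (fun i _ => hall i) i.1 i.isLt (by omega)
      simp only [altP]
      by_cases hpar : i.1 % 2 = 0
      · rw [if_pos hpar] at halt ⊢
        simp only [Fin.eta] at halt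
        rw [halt, hg0]
      · rw [if_neg hpar] at halt ⊢
        simp only [Fin.eta] at halt
        rw [halt, hg1]
    · exact ⟨g, fun i => rfl⟩
  · -- at least three values
    push_neg at hall
    obtain ⟨i0, hi0, hi1⟩ := hall
    have hP : ∃ k : ℕ, ∃ hk : k < n,
        vf ⟨k, hk⟩ ≠ vf ⟨0, by omega⟩ ∧ vf ⟨k, hk⟩ ≠ vf ⟨1, by omega⟩ :=
      ⟨i0.1, i0.isLt, by simpa using hi0, by simpa using hi1⟩
    obtain ⟨hjn, hjne0, hjne1⟩ := Nat.find_spec hP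
    have hmin : ∀ k (hk : k < Nat.find hP) (hkn : k < n),
        vf ⟨k, hkn⟩ = vf ⟨0, by omega⟩ ∨ vf ⟨k, hkn⟩ = vf ⟨1, by omega⟩ := by
      intro k hk hkn
      have := Nat.find_min hP hk
      push_neg at this
      rcases eq_or_ne (vf ⟨k, hkn⟩) (vf ⟨0, by omega⟩) with h | h
      · exact Or.inl h
      · exact Or.inr (this hkn h)
    generalize hJ : Nat.find hP = j at hjn hjne0 hjne1 hmin
    have hj2 : 2 ≤ j := by
      by_contra h
      push_neg at h
      interval_cases j
      · exact hjne0 rfl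
      · exact hjne1 rfl
    have halt := alt_below hn vf v.2 (j - 1) (fun i hi => hmin i.1 (by omega) i.isLt)
    obtain ⟨g, hg0, hg1, hg2⟩ :=
      exists_normalize (vf ⟨0, by omega⟩) (vf ⟨1, by omega⟩) (vf ⟨j, hjn⟩) h01
        (Ne.symm hjne0) (Ne.symm hjne1)
    have hinj := Projectivization.map_injective g.toLinearMap g.injective
    refine ⟨⟨fun i => Projectivization.map g.toLinearMap g.injective (vf i), ?_⟩, ?_, ?_⟩
    · intro i
      exact fun h => v.2 i (hinj h)
    · right
      refine ⟨j, hjn, hj2, ?_, ?_⟩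
      · intro i hij
        have h := halt i.1 i.isLt (by omega)
        simp only [altP]
        by_cases hpar : i.1 % 2 = 0
        · rw [if_pos hpar] at h ⊢
          simp only [Fin.eta] at h
          show Projectivization.map g.toLinearMap g.injective (vf i) = p0
          rw [h, hg0]
        · rw [if_neg hpar] at h ⊢
          simp only [Fin.eta] at h
          show Projectivization.map g.toLinearMap g.injective (vf i) = p1
          rw [h, hg1]
      · show Projectivization.map g.toLinearMap g.injective (vf ⟨j, hjn⟩) = p2
        rw [hg2]
    · exact ⟨g, fun i => rfl⟩

theorem nf_unique {n : ℕ} (hn : 2 ≤ n) (w w' : cycConfig K n)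
    (hw : (w : Fin n → Pt K) = altP n ∨ w ∈ Canon K n)
    (hw' : (w' : Fin n → Pt K) = altP n ∨ w' ∈ Canon K n)
    (hrel : pglRel K n w w') : w = w' := by
  have key : ∀ x y : cycConfig K n, (x : Fin n → Pt K) = altP n → y ∈ Canon K n →
      ¬ pglRel K n x y := by
    rintro x y hx ⟨j, hj, hj2, hyalt, hyp2⟩ ⟨g, hg⟩
    have hval : ∀ i : Fin n, (y : Fin n → Pt K) i =
        Projectivization.map g.toLinearMap g.injective p0 ∨
        (y : Fin n → Pt K) i = Projectivization.map g.toLinearMap g.injective p1 := by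
      intro i
      have h := hg i
      rw [hx] at h
      simp only [altP] at h
      by_cases hpar : i.1 % 2 = 0
      · rw [if_pos hpar] at h; exact Or.inl h.symm
      · rw [if_neg hpar] at h; exact Or.inr h.symm
    have hy0 : (y : Fin n → Pt K) ⟨0, by omega⟩ = p0 := by
      have := hyalt ⟨0, by omega⟩ (show (0:ℕ) < j by omega)
      simpa [altP] using this
    have hy1 : (y : Fin n → Pt K) ⟨1, by omega⟩ = p1 := by
      have := hyalt ⟨1, by omega⟩ (show (1:ℕ) < j by omega)
      simpa [altP] using this
    have c0 := hval ⟨0, by omega⟩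
    have c1 := hval ⟨1, by omega⟩
    have c2 := hval ⟨j, hj⟩
    rw [hy0] at c0; rw [hy1] at c1; rw [hyp2] at c2
    have n01 := p0_ne_p1 (K := K)
    have n02 := p0_ne_p2 (K := K)
    have n12 := p1_ne_p2 (K := K)
    rcases c0 with c0 | c0 <;> rcases c1 with c1 | c1 <;> rcases c2 with c2 | c2
    · exact n01 (c0.trans c1.symm)
    · exact n01 (c0.trans c1.symm)
    · exact n02 (c0.trans c2.symm)
    · exact n12 (c1.trans c2.symm)
    · exact n12 (c1.trans c2.symm)
    · exact n02 (c0.trans c2.symm)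
    · exact n01 (c0.trans c1.symm)
    · exact n01 (c0.trans c1.symm)
  rcases hw with hw | hw <;> rcases hw' with hw' | hw'
  · exact Subtype.ext (hw.trans hw'.symm)
  · exact absurd hrel (key w w' hw hw')
  · exact absurd ((pglRel_equivalence n).symm hrel) (key w' w hw' hw)
  · -- both canonical
    obtain ⟨g, hg⟩ := hrel
    obtain ⟨j, hj, hj2, halt, hp2⟩ := hw
    obtain ⟨j', hj', hj2', halt', hp2'⟩ := hw'
    have hinj := Projectivization.map_injective g.toLinearMap g.injective
    have hw00 : (w : Fin n → Pt K) ⟨0, by omega⟩ = p0 := by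
      have := halt ⟨0, by omega⟩ (show (0:ℕ) < j by omega); simpa [altP] using this
    have hw01 : (w : Fin n → Pt K) ⟨1, by omega⟩ = p1 := by
      have := halt ⟨1, by omega⟩ (show (1:ℕ) < j by omega); simpa [altP] using this
    have hw10 : (w' : Fin n → Pt K) ⟨0, by omega⟩ = p0 := by
      have := halt' ⟨0, by omega⟩ (show (0:ℕ) < j' by omega); simpa [altP] using this
    have hw11 : (w' : Fin n → Pt K) ⟨1, by omega⟩ = p1 := by
      have := halt' ⟨1, by omega⟩ (show (1:ℕ) < j' by omega); simpa [altP] using this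
    have hm0 : Projectivization.map g.toLinearMap g.injective p0 = p0 := by
      have := hg ⟨0, by omega⟩; rw [hw00, hw10] at this; exact this
    have hm1 : Projectivization.map g.toLinearMap g.injective p1 = p1 := by
      have := hg ⟨1, by omega⟩; rw [hw01, hw11] at this; exact this
    have n02 := p0_ne_p2 (K := K)
    have n12 := p1_ne_p2 (K := K)
    have hjj : j = j' := by
      refine canon_j_unique (w' : Fin n → Pt K) hj hj' ?_ ?_ ?_ ?_
      · intro i hij
        have h := hg i
        have hwi := halt i hij
        rw [hwi] at h
        simp only [altP] at h
        by_cases hpar : i.1 % 2 = 0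
        · rw [if_pos hpar, hm0] at h; rw [← h]; exact Set.mem_insert _ _
        · rw [if_neg hpar, hm1] at h; rw [← h]
          exact Set.mem_insert_of_mem _ rfl
      · have h := hg ⟨j, hj⟩
        rw [hp2] at h
        rw [← h]
        rintro (hc | hc)
        · exact n02 (hinj (hm0.symm ▸ hc : _ = Projectivization.map g.toLinearMap g.injective p0)).symm
        · exact n12 (hinj (hm1.symm ▸ hc : _ = Projectivization.map g.toLinearMap g.injective p1)).symm
      · intro i hij
        rw [halt' i hij]
        exact altP_mem_pair i
      · rw [hp2']
        rintro (hc | hc)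
        · exact n02 hc.symm
        · exact n12 hc.symm
    have hm2 : Projectivization.map g.toLinearMap g.injective p2 = p2 := by
      have := hg ⟨j, hj⟩
      rw [hp2] at this
      rw [this]
      subst hjj
      exact hp2'
    have hid := map_eq_id g hm0 hm1 hm2
    refine Subtype.ext (funext fun i => ?_)
    have := hg i
    rw [hid] at this
    exact this

end CycOrb

namespace CycOrb

variable {K : Type*} [Field K]

lemma finite_pt [Fintype K] : Finite (Pt K) := Finite.of_equiv _ ptEquiv

lemma card_quot [Fintype K] {n : ℕ} (hn : 2 ≤ n) (hdvd : 2 ∣ n) :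
    Nat.card (Quot (pglRel K n)) = 1 + Nat.card (Canon K n) := by
  classical
  haveI := finite_pt (K := K)
  set altC : cycConfig K n := ⟨altP n, altP_mem n hdvd (by omega)⟩ with haltC
  set NF : Set (cycConfig K n) := insert altC (Canon K n) with hNF
  have hmem_iff : ∀ w : cycConfig K n,
      w ∈ NF ↔ ((w : Fin n → Pt K) = altP n ∨ w ∈ Canon K n) := by
    intro w
    rw [hNF, Set.mem_insert_iff]
    constructor
    · rintro (h | h)
      · left; rw [h]
      · right; exact h
    · rintro (h | h)
      · left; exact Subtype.ext h
      · right; exact h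
  have hbij : Function.Bijective (fun w : NF => Quot.mk (pglRel K n) w.1) := by
    constructor
    · rintro ⟨w, hw⟩ ⟨w', hw'⟩ h
      simp only at h
      have := ((pglRel_equivalence (K := K) n).eqvGen_iff).1 (Quot.eq.1 h)
      exact Subtype.ext (nf_unique hn w w' ((hmem_iff w).1 hw) ((hmem_iff w').1 hw') this)
    · intro qv
      obtain ⟨v, rfl⟩ := Quot.exists_rep qv
      obtain ⟨w, hwNF, hrel⟩ := exists_nf hn hdvd v
      exact ⟨⟨w, (hmem_iff w).2 hwNF⟩, (Quot.sound hrel).symm⟩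
  rw [← Nat.card_congr (Equiv.ofBijective _ hbij)]
  have hnotmem : altC ∉ Canon K n := by
    rintro ⟨j, hj, hj2, halt, hp2⟩
    have : altP (K := K) n ⟨j, hj⟩ = p2 := hp2
    rcases altP_mem_pair (K := K) (n := n) ⟨j, hj⟩ with h | h
    · exact p0_ne_p2 (by rw [← this, h])
    · exact p1_ne_p2 (by rw [← this, Set.mem_singleton_iff.1 h])
  rw [Nat.card_coe_set_eq, Nat.card_coe_set_eq, hNF,
    Set.ncard_insert_of_notMem hnotmem (Set.toFinite _)]
  omega

end CycOrb

namespace CycOrb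

variable {K : Type*} [Field K]

/-- Adjacency-distinct sequences starting at `p2`. -/
def Seq (K : Type*) [Field K] (k : ℕ) : Type _ :=
  {u : Fin (k+1) → Pt K // u 0 = p2 ∧ ∀ i : Fin k, u i.castSucc ≠ u i.succ}

/-- Dropping the last entry of a sequence. -/
def seqInit (k : ℕ) (u : Seq K (k+1)) : Seq K k :=
  ⟨Fin.init u.1,
    by
      show u.1 (Fin.castSucc 0) = p2
      rw [Fin.castSucc_zero]
      exact u.2.1,
    by
      intro i
      show u.1 i.castSucc.castSucc ≠ u.1 i.succ.castSucc
      rw [← Fin.succ_castSucc]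
      exact u.2.2 i.castSucc⟩

lemma seqInit_last (k : ℕ) (u : Seq K (k+1)) :
    (seqInit k u).1 (Fin.last k) = u.1 (Fin.last k).castSucc := rfl

lemma seq_adj_last (k : ℕ) (u : Seq K (k+1)) :
    u.1 (Fin.last (k+1)) ≠ (seqInit k u).1 (Fin.last k) := by
  rw [seqInit_last]
  have h := u.2.2 (Fin.last k)
  rw [Fin.succ_last] at h
  exact Ne.symm h

/-- Appending an entry distinct from the last one. -/
def seqSnoc (k : ℕ) (u : Seq K k) (x : Pt K) (hx : x ≠ u.1 (Fin.last k)) : Seq K (k+1) :=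
  ⟨Fin.snoc u.1 x,
    by
      show (Fin.snoc u.1 x : Fin (k+2) → Pt K) (Fin.castSucc 0) = p2
      rw [Fin.snoc_castSucc]
      exact u.2.1,
    by
      intro i
      induction i using Fin.lastCases with
      | last =>
        show (Fin.snoc u.1 x : Fin (k+2) → Pt K) (Fin.last k).castSucc
          ≠ (Fin.snoc u.1 x : Fin (k+2) → Pt K) (Fin.last k).succ
        rw [Fin.succ_last, Fin.snoc_castSucc, Fin.snoc_last]
        exact Ne.symm hx
      | cast j =>
        show (Fin.snoc u.1 x : Fin (k+2) → Pt K) j.castSucc.castSucc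
          ≠ (Fin.snoc u.1 x : Fin (k+2) → Pt K) j.castSucc.succ
        rw [Fin.succ_castSucc, Fin.snoc_castSucc, Fin.snoc_castSucc]
        exact u.2.2 j⟩

lemma seqInit_seqSnoc (k : ℕ) (u : Seq K k) (x : Pt K) (hx : x ≠ u.1 (Fin.last k)) :
    seqInit k (seqSnoc k u x hx) = u := by
  apply Subtype.ext
  simp [seqInit, seqSnoc]

lemma seqSnoc_last (k : ℕ) (u : Seq K k) (x : Pt K) (hx : x ≠ u.1 (Fin.last k)) :
    (seqSnoc k u x hx).1 (Fin.last (k+1)) = x := by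
  simp [seqSnoc]

lemma seqSnoc_seqInit (k : ℕ) (v : Seq K (k+1)) (x : Pt K) (hv : v.1 (Fin.last (k+1)) = x)
    (hx : x ≠ (seqInit k v).1 (Fin.last k)) :
    seqSnoc k (seqInit k v) x hx = v := by
  apply Subtype.ext
  show Fin.snoc (Fin.init v.1) x = v.1
  rw [← hv]
  simp [seqInit]

section Counting

variable [Fintype K]

lemma card_pt : Nat.card (Pt K) = Fintype.card K + 1 := by
  rw [← Nat.card_congr (ptEquiv (K := K)), Finite.card_option, Nat.card_eq_fintype_card]

lemma card_ne (a : Pt K) : Nat.card {x : Pt K // x ≠ a} = Fintype.card K := by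
  classical
  haveI := finite_pt (K := K)
  have h := Nat.card_congr (Equiv.sumCompl (fun x : Pt K => x = a))
  rw [Nat.card_sum] at h
  have h1 : Nat.card {x : Pt K // x = a} = 1 := by
    rw [Nat.card_eq_one_iff_unique]
    exact ⟨⟨fun x y => Subtype.ext (x.2.trans y.2.symm)⟩, ⟨⟨a, rfl⟩⟩⟩
  rw [h1, card_pt] at h
  show Nat.card {x : Pt K // ¬ x = a} = Fintype.card K
  omega

omit [Fintype K] in
lemma card_seq_zero : Nat.card (Seq K 0) = 1 := by
  rw [Nat.card_eq_one_iff_unique]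
  constructor
  · constructor
    intro u v
    apply Subtype.ext
    funext i
    have hi : i = 0 := Fin.eq_zero i
    rw [hi, u.2.1, v.2.1]
  · exact ⟨⟨fun _ => p2, rfl, fun i => i.elim0⟩⟩

noncomputable def seq_fiber_equiv (k : ℕ) (u : Seq K k) :
    {v : Seq K (k+1) // seqInit k v = u} ≃ {x : Pt K // x ≠ u.1 (Fin.last k)} where
  toFun v := ⟨v.1.1 (Fin.last (k+1)), by
    have h := seq_adj_last k v.1
    rw [v.2] at h
    exact h⟩
  invFun x := ⟨seqSnoc k u x.1 x.2, seqInit_seqSnoc k u x.1 x.2⟩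
  left_inv := by
    rintro ⟨v, hv⟩
    subst hv
    apply Subtype.ext
    exact seqSnoc_seqInit k v _ rfl (seq_adj_last k v)
  right_inv := by
    rintro ⟨x, hx⟩
    apply Subtype.ext
    exact seqSnoc_last k u x hx

lemma finite_seq (k : ℕ) : Finite (Seq K k) := by
  haveI := finite_pt (K := K)
  exact Subtype.finite

lemma card_seq_succ (k : ℕ) :
    Nat.card (Seq K (k+1)) = (Fintype.card K) * Nat.card (Seq K k) := by
  classical
  haveI := finite_pt (K := K)
  haveI := finite_seq (K := K) k
  haveI := finite_seq (K := K) (k+1)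
  haveI : Fintype (Seq K k) := Fintype.ofFinite _
  haveI : Fintype (Seq K (k+1)) := Fintype.ofFinite _
  have e1 : Seq K (k+1) ≃ Σ u : Seq K k, {v : Seq K (k+1) // seqInit k v = u} :=
    (Equiv.sigmaFiberEquiv (seqInit (K := K) k)).symm
  rw [Nat.card_congr e1]
  haveI : ∀ u : Seq K k, Fintype {v : Seq K (k+1) // seqInit k v = u} := fun u =>
    Fintype.ofFinite _
  rw [Nat.card_eq_fintype_card, Fintype.card_sigma]
  have hfib : ∀ u : Seq K k, Fintype.card {v : Seq K (k+1) // seqInit k v = u}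
      = Fintype.card K := by
    intro u
    rw [← Nat.card_eq_fintype_card, Nat.card_congr (seq_fiber_equiv k u), card_ne]
  rw [Finset.sum_congr rfl (fun u _ => hfib u), Finset.sum_const, Finset.card_univ,
    Nat.card_eq_fintype_card]
  rw [smul_eq_mul, mul_comm]

lemma card_seq (k : ℕ) : Nat.card (Seq K k) = (Fintype.card K) ^ k := by
  induction k with
  | zero => simpa using card_seq_zero
  | succ k ih => rw [card_seq_succ, ih, pow_succ, mul_comm]

/-- `Ncnt k` : number of sequences whose last entry is not `p0`. -/
noncomputable def Ncnt (K : Type*) [Field K] [Fintype K] (k : ℕ) : ℕ :=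
  Nat.card {u : Seq K k // u.1 (Fin.last k) ≠ p0}

lemma Ncnt_zero : Ncnt K 0 = 1 := by
  rw [Ncnt, Nat.card_eq_one_iff_unique]
  constructor
  · constructor
    intro u v
    apply Subtype.ext
    apply Subtype.ext
    funext i
    have hi : i = 0 := Fin.eq_zero i
    rw [hi, u.1.2.1, v.1.2.1]
  · refine ⟨⟨⟨fun _ => p2, rfl, fun i => i.elim0⟩, ?_⟩⟩
    show p2 ≠ p0
    exact Ne.symm p0_ne_p2

noncomputable def end_equiv (k : ℕ) :
    {u : Seq K (k+1) // u.1 (Fin.last (k+1)) = p0}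
      ≃ {u : Seq K k // u.1 (Fin.last k) ≠ p0} where
  toFun u := ⟨seqInit k u.1, by
    have h := seq_adj_last k u.1
    rw [u.2] at h
    exact Ne.symm h⟩
  invFun u := ⟨seqSnoc k u.1 p0 (Ne.symm u.2), seqSnoc_last k u.1 p0 (Ne.symm u.2)⟩
  left_inv := by
    rintro ⟨v, hv⟩
    apply Subtype.ext
    exact seqSnoc_seqInit k v p0 hv (by rw [← hv]; exact seq_adj_last k v)
  right_inv := by
    rintro ⟨u, hu⟩
    apply Subtype.ext
    exact seqInit_seqSnoc k u p0 (Ne.symm hu)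

lemma Ncnt_succ_add (k : ℕ) : Ncnt K (k+1) + Ncnt K k = (Fintype.card K) ^ (k+1) := by
  classical
  haveI := finite_pt (K := K)
  haveI := finite_seq (K := K) (k+1)
  have hsplit := Nat.card_congr (Equiv.sumCompl
    (fun u : Seq K (k+1) => u.1 (Fin.last (k+1)) = p0))
  rw [Nat.card_sum] at hsplit
  have hM : Nat.card {u : Seq K (k+1) // u.1 (Fin.last (k+1)) = p0} = Ncnt K k :=
    Nat.card_congr (end_equiv k)
  rw [hM, card_seq] at hsplit
  have h1 : Ncnt K (k+1) = Nat.card {u : Seq K (k+1) // ¬ u.1 (Fin.last (k+1)) = p0} := rfl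
  rw [h1]
  omega

lemma Ncnt_sum (M : ℕ) :
    ∑ k ∈ Finset.range (2 * M), Ncnt K k
      = Fintype.card K * ∑ i ∈ Finset.range M, (Fintype.card K) ^ (2 * i) := by
  induction M with
  | zero => simp
  | succ M ih =>
    have h2 : 2 * (M + 1) = (2 * M) + 1 + 1 := by omega
    rw [h2, Finset.sum_range_succ, Finset.sum_range_succ, ih, Finset.sum_range_succ]
    have h3 := Ncnt_succ_add (K := K) (2 * M)
    rw [mul_add]
    have hpow : Fintype.card K * Fintype.card K ^ (2 * M) = Fintype.card K ^ (2 * M + 1) := by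
      rw [pow_succ, mul_comm]
    omega

end Counting

end CycOrb

namespace CycOrb

variable {K : Type*} [Field K]

/-- Build a canonical configuration from a tail sequence. -/
noncomputable def buildF (n k : ℕ) (u : Seq K k) : Fin n → Pt K :=
  fun i => if i.1 < n - 1 - k then altP n i
    else u.1 ⟨i.1 - (n - 1 - k), by have := i.2; omega⟩

lemma cycSucc_mk {n : ℕ} (x : ℕ) (hx : x < n) (hx1 : x + 1 < n) :
    cycSucc ⟨x, hx⟩ = ⟨x + 1, hx1⟩ :=
  Fin.ext (Nat.mod_eq_of_lt hx1)

lemma cycSucc_wrap {n : ℕ} (hn : 0 < n) (x : ℕ) (hx : x < n) (h : x = n - 1) :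
    cycSucc ⟨x, hx⟩ = ⟨0, hn⟩ := by
  apply Fin.ext
  show (x + 1) % n = 0
  subst h
  rw [(by omega : n - 1 + 1 = n), Nat.mod_self]

lemma buildF_mk_lt {n k : ℕ} (u : Seq K k) (x : ℕ) (hx : x < n) (h : x < n - 1 - k) :
    buildF n k u ⟨x, hx⟩ = altP n ⟨x, hx⟩ := if_pos h

lemma buildF_mk_ge {n k : ℕ} (u : Seq K k) (x : ℕ) (hx : x < n) (h : ¬ x < n - 1 - k)
    (y : ℕ) (hy : y < k + 1) (hxy : x - (n - 1 - k) = y) :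
    buildF n k u ⟨x, hx⟩ = u.1 ⟨y, hy⟩ := by
  subst hxy
  show (if x < n - 1 - k then altP n ⟨x, hx⟩ else u.1 ⟨x - (n - 1 - k), _⟩)
    = u.1 ⟨x - (n - 1 - k), hy⟩
  rw [if_neg h]

lemma altP_ne_succ {n : ℕ} (i i' : Fin n) (h : i'.1 = i.1 + 1) :
    altP (K := K) n i ≠ altP n i' := by
  simp only [altP, h]
  by_cases hpar : i.1 % 2 = 0
  · rw [if_pos hpar, if_neg (by omega)]
    exact p0_ne_p1
  · rw [if_neg hpar, if_pos (by omega)]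
    exact (p0_ne_p1 (K := K)).symm

lemma altP_ne_p2 {n : ℕ} (i : Fin n) : altP (K := K) n i ≠ p2 := by
  rcases altP_mem_pair (K := K) (n := n) i with h | h
  · rw [h]; exact p0_ne_p2
  · rw [Set.mem_singleton_iff.1 h]; exact p1_ne_p2

lemma altP_mk_zero {n : ℕ} (h : 0 < n) : altP (K := K) n ⟨0, h⟩ = p0 := by simp [altP]

lemma buildF_mem (n k : ℕ) (hn : 4 ≤ n) (hk : k ≤ n - 3) (u : Seq K k)
    (hlast : u.1 (Fin.last k) ≠ p0) : buildF n k u ∈ cycConfig K n := by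
  intro i
  obtain ⟨x, hx⟩ := i
  have hj2 : 2 ≤ n - 1 - k := by omega
  have hjk : (n - 1 - k) + k = n - 1 := by omega
  rcases Nat.lt_or_ge (x + 1) n with hin | hin
  · rw [cycSucc_mk x hx hin]
    rcases Nat.lt_or_ge (x + 1) (n - 1 - k) with h1 | h1
    · rw [buildF_mk_lt u x hx (by omega), buildF_mk_lt u (x+1) hin h1]
      exact altP_ne_succ _ _ rfl
    · rcases Nat.lt_or_ge x (n - 1 - k) with h2 | h2
      · rw [buildF_mk_lt u x hx h2,
          buildF_mk_ge u (x+1) hin (by omega) 0 (by omega) (by omega)]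
        have hu0 : u.1 (⟨0, by omega⟩ : Fin (k + 1)) = p2 := u.2.1
        rw [hu0]
        exact altP_ne_p2 _
      · have hxk : x - (n - 1 - k) < k := by omega
        rw [buildF_mk_ge u x hx (by omega) (x - (n - 1 - k)) (by omega) rfl,
          buildF_mk_ge u (x+1) hin (by omega) (x - (n - 1 - k) + 1) (by omega) (by omega)]
        have hc : (⟨x - (n - 1 - k), by omega⟩ : Fin (k + 1))
            = (⟨x - (n - 1 - k), hxk⟩ : Fin k).castSucc := rfl
        have hs : (⟨x - (n - 1 - k) + 1, by omega⟩ : Fin (k + 1))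
            = (⟨x - (n - 1 - k), hxk⟩ : Fin k).succ := rfl
        rw [hc, hs]
        exact u.2.2 _
  · have hx1 : x = n - 1 := by omega
    rw [cycSucc_wrap (by omega) x hx hx1]
    rw [buildF_mk_lt u 0 (by omega) (by omega), altP_mk_zero]
    rw [buildF_mk_ge u x hx (by omega) k (by omega) (by omega)]
    show u.1 (Fin.last k) ≠ p0
    exact hlast

lemma buildF_isCanon (n k : ℕ) (hn : 4 ≤ n) (hk : k ≤ n - 3) (u : Seq K k) :
    IsCanon (buildF n k u) := by
  refine ⟨n - 1 - k, by omega, by omega, ?_, ?_⟩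
  · intro i hij
    obtain ⟨x, hx⟩ := i
    exact buildF_mk_lt u x hx hij
  · rw [buildF_mk_ge u (n - 1 - k) (by omega) (by omega) 0 (by omega) (by omega)]
    exact u.2.1

lemma card_canon (n : ℕ) (hn : 4 ≤ n) [Fintype K] :
    Nat.card (Canon K n) = ∑ k ∈ Finset.range (n - 2), Ncnt K k := by
  classical
  haveI := finite_pt (K := K)
  have hΦdef : ∀ (k : Fin (n - 2)) (u : {u : Seq K k.1 // u.1 (Fin.last k.1) ≠ p0}),
      buildF n k.1 u.1 ∈ cycConfig K n := fun k u =>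
    buildF_mem n k.1 hn (by have := k.2; omega) u.1 u.2
  let Φ : (Σ k : Fin (n - 2), {u : Seq K k.1 // u.1 (Fin.last k.1) ≠ p0}) → Canon K n :=
    fun a => ⟨⟨buildF n a.1.1 a.2.1, hΦdef a.1 a.2⟩,
      buildF_isCanon n a.1.1 hn (by have := a.1.2; omega) a.2.1⟩
  have hbij : Function.Bijective Φ := by
    constructor
    · rintro ⟨k, u⟩ ⟨k', u'⟩ h
      have hval : buildF n k.1 u.1 = buildF n k'.1 u'.1 :=
        congrArg (fun w : Canon K n => (w.1 : Fin n → Pt K)) h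
      have hkk : k.1 = k'.1 := by
        have hjj : n - 1 - k.1 = n - 1 - k'.1 := by
          refine canon_j_unique (buildF n k.1 u.1)
            (show n - 1 - k.1 < n by omega) (show n - 1 - k'.1 < n by omega) ?_ ?_ ?_ ?_
          · intro i hij
            obtain ⟨x, hx⟩ := i
            rw [buildF_mk_lt u.1 x hx hij]
            exact altP_mem_pair _
          · rw [buildF_mk_ge u.1 (n - 1 - k.1) (by omega) (by omega) 0 (by omega) (by omega)]
            have hu0 : u.1.1 (⟨0, by omega⟩ : Fin (k.1 + 1)) = p2 := u.1.2.1
            rw [hu0]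
            rintro (hc | hc)
            · exact p0_ne_p2 hc.symm
            · exact p1_ne_p2 (Set.mem_singleton_iff.1 hc).symm
          · intro i hij
            obtain ⟨x, hx⟩ := i
            rw [hval, buildF_mk_lt u'.1 x hx hij]
            exact altP_mem_pair _
          · rw [hval,
              buildF_mk_ge u'.1 (n - 1 - k'.1) (by omega) (by omega) 0 (by omega) (by omega)]
            have hu0 : u'.1.1 (⟨0, by omega⟩ : Fin (k'.1 + 1)) = p2 := u'.1.2.1
            rw [hu0]
            rintro (hc | hc)
            · exact p0_ne_p2 hc.symm
            · exact p1_ne_p2 (Set.mem_singleton_iff.1 hc).symm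
        have hk3 := k.2
        have hk3' := k'.2
        omega
      have hk : k = k' := Fin.ext hkk
      subst hk
      have huu : u = u' := by
        apply Subtype.ext
        apply Subtype.ext
        funext i
        obtain ⟨y, hy⟩ := i
        have hxn : n - 1 - k.1 + y < n := by have := k.2; omega
        have hfi := congrFun hval ⟨n - 1 - k.1 + y, hxn⟩
        rw [buildF_mk_ge u.1 _ hxn (by omega) y hy (by omega),
          buildF_mk_ge u'.1 _ hxn (by omega) y hy (by omega)] at hfi
        exact hfi
      rw [huu]
    · rintro ⟨w, j, hjn, hj2, halt, hp2⟩
      have hw0 : (w : Fin n → Pt K) ⟨0, by omega⟩ = p0 := by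
        have := halt ⟨0, by omega⟩ (show (0:ℕ) < j by omega)
        simpa [altP] using this
      have hkn : n - 1 - j < n - 2 := by omega
      have hbnd : ∀ y : ℕ, y < n - 1 - j + 1 → j + y < n := by
        intro y hy; omega
      have hjk : j = n - 1 - (n - 1 - j) := by omega
      set uf : Fin (n - 1 - j + 1) → Pt K :=
        fun i => (w : Fin n → Pt K) ⟨j + i.1, hbnd i.1 i.2⟩ with huf
      have hu0 : uf 0 = p2 := by
        show (w : Fin n → Pt K) ⟨j + (0 : Fin (n-1-j+1)).1, _⟩ = p2
        have he : (⟨j + (0 : Fin (n-1-j+1)).1, hbnd _ (0 : Fin (n-1-j+1)).2⟩ : Fin n)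
            = ⟨j, hjn⟩ := Fin.ext (by show j + 0 = j; omega)
        rw [he]
        exact hp2
      have huadj : ∀ i : Fin (n - 1 - j), uf i.castSucc ≠ uf i.succ := by
        intro i
        have hi2 := i.2
        have hadj := w.2 ⟨j + i.1, by omega⟩
        rw [cycSucc_mk (j + i.1) (by omega) (by omega)] at hadj
        show (w : Fin n → Pt K) ⟨j + i.castSucc.1, _⟩ ≠ (w : Fin n → Pt K) ⟨j + i.succ.1, _⟩
        have e1 : (⟨j + i.castSucc.1, hbnd _ i.castSucc.2⟩ : Fin n)
            = ⟨j + i.1, by omega⟩ := Fin.ext rfl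
        have e2 : (⟨j + i.succ.1, hbnd _ i.succ.2⟩ : Fin n)
            = ⟨j + i.1 + 1, by omega⟩ := Fin.ext (by show j + (i.1 + 1) = j + i.1 + 1; omega)
        rw [e1, e2]
        exact hadj
      have hulast : uf (Fin.last (n - 1 - j)) ≠ p0 := by
        have hadj := w.2 ⟨n - 1, by omega⟩
        rw [cycSucc_wrap (by omega) (n - 1) (by omega) rfl] at hadj
        rw [show (⟨0, by omega⟩ : Fin n) = ⟨0, by omega⟩ from rfl] at hadj
        have hw0' : (w : Fin n → Pt K) ⟨0, by omega⟩ = p0 := hw0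
        show (w : Fin n → Pt K) ⟨j + (Fin.last (n - 1 - j)).1, _⟩ ≠ p0
        have e1 : (⟨j + (Fin.last (n - 1 - j)).1, hbnd _ (Fin.last (n - 1 - j)).2⟩ : Fin n)
            = ⟨n - 1, by omega⟩ := Fin.ext (by show j + (n - 1 - j) = n - 1; omega)
        rw [e1, ← hw0']
        exact hadj
      refine ⟨⟨⟨n - 1 - j, hkn⟩, ⟨⟨uf, hu0, huadj⟩, hulast⟩⟩, ?_⟩
      apply Subtype.ext
      apply Subtype.ext
      show buildF n (n - 1 - j) ⟨uf, hu0, huadj⟩ = (w : Fin n → Pt K)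
      funext i
      obtain ⟨x, hx⟩ := i
      rcases Nat.lt_or_ge x (n - 1 - (n - 1 - j)) with hik | hik
      · exact (buildF_mk_lt _ x hx hik).trans (halt ⟨x, hx⟩ (show x < j by omega)).symm
      · refine (buildF_mk_ge _ x hx (by omega) (x - (n - 1 - (n - 1 - j)))
          (by omega) rfl).trans ?_
        show (w : Fin n → Pt K) ⟨j + (x - (n - 1 - (n - 1 - j))), _⟩
          = (w : Fin n → Pt K) ⟨x, hx⟩
        have e1 : (⟨j + (x - (n - 1 - (n - 1 - j))),
            hbnd _ (by omega)⟩ : Fin n) = ⟨x, hx⟩ := Fin.ext (by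
          show j + (x - (n - 1 - (n - 1 - j))) = x
          omega)
        rw [e1]
  rw [← Nat.card_congr (Equiv.ofBijective Φ hbij)]
  haveI : ∀ k : Fin (n-2), Fintype {u : Seq K k.1 // u.1 (Fin.last k.1) ≠ p0} := by
    intro k
    haveI := finite_seq (K := K) k.1
    exact Fintype.ofFinite _
  rw [Nat.card_eq_fintype_card, Fintype.card_sigma]
  rw [← Fin.sum_univ_eq_sum_range (fun k => Ncnt K k) (n - 2)]
  refine Finset.sum_congr rfl (fun k _ => ?_)
  rw [Ncnt, Nat.card_eq_fintype_card]

end CycOrb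

theorem card_orbits_cycConfig_even (K : Type*) [Field K] [Fintype K]
    (m : ℕ) (hm : 2 ≤ m) :
    Nat.card (Quot (pglRel K (2 * m))) =
      1 + Fintype.card K * ∑ i ∈ range (m - 1), Fintype.card K ^ (2 * i) := by
  rw [CycOrb.card_quot (show 2 ≤ 2 * m by omega) ⟨m, rfl⟩,
    CycOrb.card_canon (2 * m) (show 4 ≤ 2 * m by omega),
    show 2 * m - 2 = 2 * (m - 1) by omega,
    CycOrb.Ncnt_sum]
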